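/- Let G be a connected weighted graph, s,t vertices, and ε > 0. Let H₀ be a subgraph of G with d_{H₀}(s,t) > d_G(s,t) + (4+ε)·W(s,t), and let H₁ be H₀ together with all edges of π(s,t). Let a and b be vertices with d_{H₀}(s,a) ≤ W(s,t) and d_{H₀}(t,b) ≤ W(s,t), and let x be a vertex with d_{H₀}(y,x) ≤ (ε/4)·W(s,t) for some vertex y on π(s,t). Then: (1) d_{H₁}(a,x) ≤ d_G(a,x) + (2+ε)·W(s,t) and d_{H₁}(b,x) ≤ d_G(b,x) + (2+ε)·W(s,t); and (2) d_{H₀}(a,x) − d_{H₁}(a,x) ≥ (ε/4)·W(s,t) or d_{H₀}(b,x) − d_{H₁}(b,x) ≥ (ε/4)·W(s,t). -/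

import Mathlib

open scoped ENNReal Classical

/-- The total weight of a walk: the sum of the weights of its edges. -/
noncomputable def walkWeight {V : Type} (G : SimpleGraph V) (w : Sym2 V → ℝ≥0∞)
    {s t : V} (p : G.Walk s t) : ℝ≥0∞ :=
  (p.edges.map w).sum

/-- Shortest-path distance in the weighted graph `(G, w)`, equal to `⊤` if there is no path. -/
noncomputable def gdist {V : Type} (G : SimpleGraph V) (w : Sym2 V → ℝ≥0∞)
    (s t : V) : ℝ≥0∞ :=
  ⨅ p : G.Walk s t, walkWeight G w p

/-- The maximum edge weight along a walk (0 for the trivial walk). -/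
noncomputable def maxEdge {V : Type} (G : SimpleGraph V) (w : Sym2 V → ℝ≥0∞)
    {s t : V} (p : G.Walk s t) : ℝ≥0∞ :=
  (p.edges.map w).foldr max 0

/-- `π` assigns to each ordered vertex pair a shortest path: a walk whose total
weight equals the shortest-path distance. -/
def IsShortestPathScheme {V : Type} (G : SimpleGraph V) (w : Sym2 V → ℝ≥0∞)
    (π : (s t : V) → G.Walk s t) : Prop :=
  ∀ s t : V, walkWeight G w (π s t) = gdist G w s t

/-- The edge weights are positive and finite on all edges of `G`. -/
def PosWeights {V : Type} (G : SimpleGraph V) (w : Sym2 V → ℝ≥0∞) : Prop :=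
  ∀ e ∈ G.edgeSet, 0 < w e ∧ w e ≠ ⊤

lemma walkWeight_append {V : Type} (G : SimpleGraph V) (w : Sym2 V → ℝ≥0∞)
    {u v z : V} (p : G.Walk u v) (q : G.Walk v z) :
    walkWeight G w (p.append q) = walkWeight G w p + walkWeight G w q := by
  simp [walkWeight, SimpleGraph.Walk.edges_append]

lemma gdist_le_walkWeight {V : Type} (G : SimpleGraph V) (w : Sym2 V → ℝ≥0∞)
    {u v : V} (p : G.Walk u v) : gdist G w u v ≤ walkWeight G w p := iInf_le _ p

lemma gdist_triangle {V : Type} (G : SimpleGraph V) (w : Sym2 V → ℝ≥0∞)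
    (u v z : V) : gdist G w u z ≤ gdist G w u v + gdist G w v z := by
  have h : gdist G w u v + gdist G w v z
      = ⨅ p : G.Walk u v, ⨅ q : G.Walk v z, walkWeight G w p + walkWeight G w q := by
    rw [gdist, gdist, ENNReal.iInf_add]
    exact iInf_congr fun p => ENNReal.add_iInf
  rw [h]
  refine le_iInf fun p => le_iInf fun q => ?_
  calc gdist G w u z ≤ walkWeight G w (p.append q) := gdist_le_walkWeight G w _
    _ = _ := walkWeight_append G w p q

lemma walkWeight_reverse {V : Type} (G : SimpleGraph V) (w : Sym2 V → ℝ≥0∞)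
    {u v : V} (p : G.Walk u v) : walkWeight G w p.reverse = walkWeight G w p := by
  simp [walkWeight, SimpleGraph.Walk.edges_reverse, List.sum_reverse]

lemma gdist_symm {V : Type} (G : SimpleGraph V) (w : Sym2 V → ℝ≥0∞)
    (u v : V) : gdist G w u v = gdist G w v u := by
  have key : ∀ a b : V, gdist G w a b ≤ gdist G w b a := by
    intro a b
    refine le_iInf fun p => ?_
    calc gdist G w a b ≤ walkWeight G w p.reverse := gdist_le_walkWeight G w _
      _ = walkWeight G w p := walkWeight_reverse G w p
  exact le_antisymm (key u v) (key v u)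

lemma gdist_anti {V : Type} {H G : SimpleGraph V} (w : Sym2 V → ℝ≥0∞)
    (hHG : H ≤ G) (u v : V) : gdist G w u v ≤ gdist H w u v := by
  refine le_iInf fun p => ?_
  have hp : ∀ e ∈ p.edges, e ∈ G.edgeSet := fun e he =>
    SimpleGraph.edgeSet_mono hHG (p.edges_subset_edgeSet he)
  calc gdist G w u v ≤ walkWeight G w (p.transfer G hp) := gdist_le_walkWeight G w _
    _ = walkWeight H w p := by simp [walkWeight, SimpleGraph.Walk.edges_transfer]


/-- Set-off/improvement lemma for `+(4+ε)W(·,·)` spanner completion.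
`H₀` is a subgraph still violating the `+(4+ε)·W(s,t)` bound for `(s,t)`, `H₁` is `H₀` plus
all edges of `π(s,t)`; `a` and `b` are vertices with `d_{H₀}(s,a) ≤ W(s,t)` and
`d_{H₀}(t,b) ≤ W(s,t)`, and `x` is a vertex with `d_{H₀}(y,x) ≤ (ε/4)·W(s,t)` for some
vertex `y` on `π(s,t)`. Then the pairs `(a,x)` and `(b,x)` are set off in `H₁`, and at least
one of them improves by at least `(ε/4)·W(s,t)`. -/
theorem improvements_four_plus_eps_W
    (V : Type) [Fintype V] (G : SimpleGraph V) (w : Sym2 V → ℝ≥0∞)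
    (hconn : G.Connected) (hw : PosWeights G w)
    (π : (s t : V) → G.Walk s t) (hπ : IsShortestPathScheme G w π)
    (s t : V) (ε : ℝ) (hε : 0 < ε)
    (H₀ H₁ : SimpleGraph V) (hH₀ : H₀ ≤ G)
    (hviol : gdist H₀ w s t >
      gdist G w s t + ENNReal.ofReal (4 + ε) * maxEdge G w (π s t))
    (hH₁ : H₁ = H₀ ⊔ SimpleGraph.fromEdgeSet {e | e ∈ (π s t).edges})
    (a b : V)
    (ha : gdist H₀ w s a ≤ maxEdge G w (π s t))
    (hb : gdist H₀ w t b ≤ maxEdge G w (π s t))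
    (x y : V) (hy : y ∈ (π s t).support)
    (hx : gdist H₀ w y x ≤ ENNReal.ofReal (ε / 4) * maxEdge G w (π s t)) :
    (gdist H₁ w a x ≤ gdist G w a x + ENNReal.ofReal (2 + ε) * maxEdge G w (π s t) ∧
      gdist H₁ w b x ≤ gdist G w b x + ENNReal.ofReal (2 + ε) * maxEdge G w (π s t)) ∧
    (gdist H₀ w a x - gdist H₁ w a x ≥ ENNReal.ofReal (ε / 4) * maxEdge G w (π s t) ∨
      gdist H₀ w b x - gdist H₁ w b x ≥ ENNReal.ofReal (ε / 4) * maxEdge G w (π s t)) := by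
  set W := maxEdge G w (π s t) with hWdef
  set ε4 := ENNReal.ofReal (ε / 4) with hε4def
  -- basic graph facts
  have hπG : ∀ e ∈ (π s t).edges, e ∈ G.edgeSet :=
    fun e he => (π s t).edges_subset_edgeSet he
  have hH₁G : H₁ ≤ G := by
    rw [hH₁]
    refine sup_le hH₀ ?_
    intro u v huv
    rw [SimpleGraph.fromEdgeSet_adj] at huv
    exact (SimpleGraph.mem_edgeSet G).1 (hπG _ huv.1)
  have hH₀₁ : H₀ ≤ H₁ := hH₁ ▸ le_sup_left
  have hedges : ∀ e ∈ (π s t).edges, e ∈ H₁.edgeSet := by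
    intro e he
    rw [hH₁, SimpleGraph.edgeSet_sup]
    right
    rw [SimpleGraph.edgeSet_fromEdgeSet]
    exact ⟨he, G.not_isDiag_of_mem_edgeSet (hπG e he)⟩
  have hd10 : ∀ u v : V, gdist H₁ w u v ≤ gdist H₀ w u v := gdist_anti w hH₀₁
  have hdG1 : ∀ u v : V, gdist G w u v ≤ gdist H₁ w u v := gdist_anti w hH₁G
  have hdG0 : ∀ u v : V, gdist G w u v ≤ gdist H₀ w u v := gdist_anti w hH₀
  -- prefix and suffix weights
  set P := walkWeight G w ((π s t).takeUntil y hy) with hPdef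
  set Q := walkWeight G w ((π s t).dropUntil y hy) with hQdef
  have hPQ : P + Q = gdist G w s t := by
    rw [← hπ s t, ← walkWeight_append, (π s t).take_spec hy]
  have h1P : gdist H₁ w s y ≤ P := by
    have hsub : ∀ e ∈ ((π s t).takeUntil y hy).edges, e ∈ H₁.edgeSet :=
      fun e he => hedges e ((π s t).edges_takeUntil_subset hy he)
    calc gdist H₁ w s y
        ≤ walkWeight H₁ w (((π s t).takeUntil y hy).transfer H₁ hsub) :=
          gdist_le_walkWeight H₁ w _
      _ = P := by simp [hPdef, walkWeight, SimpleGraph.Walk.edges_transfer]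
  have h1Q : gdist H₁ w y t ≤ Q := by
    have hsub : ∀ e ∈ ((π s t).dropUntil y hy).edges, e ∈ H₁.edgeSet :=
      fun e he => hedges e ((π s t).edges_dropUntil_subset hy he)
    calc gdist H₁ w y t
        ≤ walkWeight H₁ w (((π s t).dropUntil y hy).transfer H₁ hsub) :=
          gdist_le_walkWeight H₁ w _
      _ = Q := by simp [hQdef, walkWeight, SimpleGraph.Walk.edges_transfer]
  -- finiteness
  have hRHS : gdist G w s t + ENNReal.ofReal (4 + ε) * W ≠ ⊤ :=
    (lt_of_lt_of_le hviol le_top).ne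
  have hDfin : gdist G w s t ≠ ⊤ := fun h => hRHS (by simp [h])
  have hQfin : Q ≠ ⊤ := by
    intro h
    exact hDfin (by rw [← hPQ, h, add_top])
  have hPfin : P ≠ ⊤ := by
    intro h
    exact hDfin (by rw [← hPQ, h, top_add])
  -- prefix/suffix weights are geodesic
  have hGP : P ≤ gdist G w s y := by
    have h1 : P + Q ≤ gdist G w s y + Q := by
      rw [hPQ]
      exact (gdist_triangle G w s y t).trans
        (add_le_add_right (gdist_le_walkWeight G w _) _)
    exact ENNReal.le_of_add_le_add_right hQfin h1
  have hGQ : Q ≤ gdist G w y t := by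
    have h1 : Q + P ≤ gdist G w y t + P := by
      rw [add_comm, hPQ]
      calc gdist G w s t ≤ gdist G w s y + gdist G w y t := gdist_triangle G w s y t
        _ ≤ walkWeight G w _ + gdist G w y t :=
            add_le_add_left (gdist_le_walkWeight G w _) _
        _ = gdist G w y t + P := add_comm _ _
    exact ENNReal.le_of_add_le_add_right hPfin h1
  -- pieces
  have haW : gdist H₁ w a s ≤ W := by
    rw [gdist_symm]
    exact (hd10 s a).trans ha
  have hbW : gdist H₁ w b t ≤ W := by
    rw [gdist_symm]
    exact (hd10 t b).trans hb
  have hyx1 : gdist H₁ w y x ≤ ε4 * W := (hd10 y x).trans hx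
  -- the two main upper bounds on d₁
  have hax1 : gdist H₁ w a x ≤ W + (gdist H₁ w s y + ε4 * W) := by
    calc gdist H₁ w a x
        ≤ gdist H₁ w a s + (gdist H₁ w s y + gdist H₁ w y x) :=
          (gdist_triangle H₁ w a s x).trans
            (add_le_add_right (gdist_triangle H₁ w s y x) _)
      _ ≤ W + (gdist H₁ w s y + ε4 * W) :=
          add_le_add haW (add_le_add_right hyx1 _)
  have hbx1 : gdist H₁ w b x ≤ W + (gdist H₁ w y t + ε4 * W) := by
    calc gdist H₁ w b x
        ≤ gdist H₁ w b t + (gdist H₁ w t y + gdist H₁ w y x) :=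
          (gdist_triangle H₁ w b t x).trans
            (add_le_add_right (gdist_triangle H₁ w t y x) _)
      _ = gdist H₁ w b t + (gdist H₁ w y t + gdist H₁ w y x) := by
          rw [gdist_symm H₁ w t y]
      _ ≤ W + (gdist H₁ w y t + ε4 * W) :=
          add_le_add hbW (add_le_add_right hyx1 _)
  -- coefficient bounds
  have hcoef2 : (1 : ℝ≥0∞) + 1 + ε4 + ε4 ≤ ENNReal.ofReal (2 + ε) := by
    rw [hε4def, ← ENNReal.ofReal_one,
      ← ENNReal.ofReal_add (by norm_num) (by positivity),
      ← ENNReal.ofReal_add (by norm_num) (by positivity),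
      ← ENNReal.ofReal_add (by positivity) (by positivity)]
    exact ENNReal.ofReal_le_ofReal (by linarith)
  -- Part 1
  have part1a : gdist H₁ w a x ≤ gdist G w a x + ENNReal.ofReal (2 + ε) * W := by
    have hG1 : gdist G w s y ≤ W + gdist G w a x + ε4 * W := by
      calc gdist G w s y
          ≤ gdist G w s a + (gdist G w a x + gdist G w x y) :=
            (gdist_triangle G w s a y).trans
              (add_le_add_right (gdist_triangle G w a x y) _)
        _ = gdist G w s a + (gdist G w a x + gdist G w y x) := by
            rw [gdist_symm G w x y]
        _ ≤ W + (gdist G w a x + ε4 * W) :=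
            add_le_add ((hdG0 s a).trans ha) (add_le_add_right ((hdG0 y x).trans hx) _)
        _ = W + gdist G w a x + ε4 * W := by ring
    calc gdist H₁ w a x
        ≤ W + (gdist H₁ w s y + ε4 * W) := hax1
      _ ≤ W + (P + ε4 * W) := add_le_add_right (add_le_add_left h1P _) _
      _ ≤ W + (gdist G w s y + ε4 * W) := add_le_add_right (add_le_add_left hGP _) _
      _ ≤ W + (W + gdist G w a x + ε4 * W + ε4 * W) :=
          add_le_add_right (add_le_add_left hG1 _) _
      _ = gdist G w a x + ((1 : ℝ≥0∞) + 1 + ε4 + ε4) * W := by ring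
      _ ≤ gdist G w a x + ENNReal.ofReal (2 + ε) * W :=
          add_le_add_right (mul_le_mul_left hcoef2 W) _
  have part1b : gdist H₁ w b x ≤ gdist G w b x + ENNReal.ofReal (2 + ε) * W := by
    have hG1 : gdist G w y t ≤ ε4 * W + gdist G w b x + W := by
      calc gdist G w y t
          ≤ gdist G w y x + (gdist G w x b + gdist G w b t) :=
            (gdist_triangle G w y x t).trans
              (add_le_add_right (gdist_triangle G w x b t) _)
        _ = gdist G w y x + (gdist G w b x + gdist G w t b) := by
            rw [gdist_symm G w x b, gdist_symm G w b t]
        _ ≤ ε4 * W + (gdist G w b x + W) :=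
            add_le_add ((hdG0 y x).trans hx)
              (add_le_add_right ((hdG0 t b).trans hb) _)
        _ = ε4 * W + gdist G w b x + W := by ring
    calc gdist H₁ w b x
        ≤ W + (gdist H₁ w y t + ε4 * W) := hbx1
      _ ≤ W + (Q + ε4 * W) := add_le_add_right (add_le_add_left h1Q _) _
      _ ≤ W + (gdist G w y t + ε4 * W) := add_le_add_right (add_le_add_left hGQ _) _
      _ ≤ W + (ε4 * W + gdist G w b x + W + ε4 * W) :=
          add_le_add_right (add_le_add_left hG1 _) _
      _ = gdist G w b x + ((1 : ℝ≥0∞) + 1 + ε4 + ε4) * W := by ring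
      _ ≤ gdist G w b x + ENNReal.ofReal (2 + ε) * W :=
          add_le_add_right (mul_le_mul_left hcoef2 W) _
  refine ⟨⟨part1a, part1b⟩, ?_⟩
  -- Part 2
  by_contra hcon
  push_neg at hcon
  obtain ⟨h1, h2⟩ := hcon
  have hax0 : gdist H₀ w a x ≤ ε4 * W + gdist H₁ w a x := by
    calc gdist H₀ w a x
        = gdist H₀ w a x - gdist H₁ w a x + gdist H₁ w a x :=
          (tsub_add_cancel_of_le (hd10 a x)).symm
      _ ≤ ε4 * W + gdist H₁ w a x := add_le_add_left h1.le _
  have hbx0 : gdist H₀ w b x ≤ ε4 * W + gdist H₁ w b x := by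
    calc gdist H₀ w b x
        = gdist H₀ w b x - gdist H₁ w b x + gdist H₁ w b x :=
          (tsub_add_cancel_of_le (hd10 b x)).symm
      _ ≤ ε4 * W + gdist H₁ w b x := add_le_add_left h2.le _
  have hfinal : gdist H₀ w s t ≤ gdist G w s t + ENNReal.ofReal (4 + ε) * W := by
    have hcoef4 : (1 : ℝ≥0∞) + 1 + 1 + 1 + ε4 + ε4 + ε4 + ε4 = ENNReal.ofReal (4 + ε) := by
      rw [hε4def, ← ENNReal.ofReal_one,
        ← ENNReal.ofReal_add (by norm_num) (by positivity),
        ← ENNReal.ofReal_add (by norm_num) (by positivity),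
        ← ENNReal.ofReal_add (by norm_num) (by positivity),
        ← ENNReal.ofReal_add (by norm_num) (by positivity),
        ← ENNReal.ofReal_add (by positivity) (by positivity),
        ← ENNReal.ofReal_add (by positivity) (by positivity),
        ← ENNReal.ofReal_add (by positivity) (by positivity)]
      congr 1
      ring
    calc gdist H₀ w s t
        ≤ gdist H₀ w s a + (gdist H₀ w a x + (gdist H₀ w x b + gdist H₀ w b t)) := by
          refine (gdist_triangle H₀ w s a t).trans (add_le_add_right ?_ _)
          refine (gdist_triangle H₀ w a x t).trans (add_le_add_right ?_ _)
          exact gdist_triangle H₀ w x b t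
      _ = gdist H₀ w s a + (gdist H₀ w a x + (gdist H₀ w b x + gdist H₀ w t b)) := by
          rw [gdist_symm H₀ w x b, gdist_symm H₀ w b t]
      _ ≤ W + ((ε4 * W + gdist H₁ w a x) + ((ε4 * W + gdist H₁ w b x) + W)) :=
          add_le_add ha (add_le_add hax0 (add_le_add hbx0 hb))
      _ ≤ W + ((ε4 * W + (W + (P + ε4 * W))) + ((ε4 * W + (W + (Q + ε4 * W))) + W)) := by
          refine add_le_add_right (add_le_add (add_le_add_right ?_ _)
            (add_le_add_left (add_le_add_right ?_ _) _)) _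
          · exact hax1.trans (add_le_add_right (add_le_add_left h1P _) _)
          · exact hbx1.trans (add_le_add_right (add_le_add_left h1Q _) _)
      _ = (P + Q) + ((1 : ℝ≥0∞) + 1 + 1 + 1 + ε4 + ε4 + ε4 + ε4) * W := by ring
      _ = gdist G w s t + ENNReal.ofReal (4 + ε) * W := by rw [hPQ, hcoef4]
  exact absurd hviol (not_lt.mpr hfinal)
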